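/- arXiv:1104.4594 — 2 statements merged into one kernel-verified Lean document; each statement's English description precedes it below -/
import Mathlib

section
/- Let F = ℚ(y) with y⁸ = −15 and L = ℚ(z) with z⁸ = −240. Then the integral trace forms of F and L are not equivalent: there is no ℤ-linear isomorphism O_F → O_L preserving the bilinear form (x,y) ↦ trace(xy). -/
open NumberField Module

/-- Two number fields have equivalent integral trace forms if there is a `ℤ`-linear
isomorphism of the rings of integers preserving the trace pairing `(x, y) ↦ tr(x * y)`. -/
def IntTraceEquiv (F L : Type*) [Field F] [NumberField F] [Field L] [NumberField L] : Prop :=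
  ∃ e : 𝓞 F ≃ₗ[ℤ] 𝓞 L, ∀ x y : 𝓞 F,
    Algebra.intTrace ℤ (𝓞 L) (e x * e y) = Algebra.intTrace ℤ (𝓞 F) (x * y)

section AuxLemmas

open LinearMap

section
variable {K M N : Type*} [Field K] [AddCommGroup M] [Module K M] [AddCommGroup N] [Module K N]
  [Module.Finite K M] [Module.Finite K N]

lemma trace_prod_decomp (F : (M × N) →ₗ[K] (M × N)) :
    trace K (M × N) F =
      trace K M ((fst K M N) ∘ₗ F ∘ₗ (inl K M N)) +
      trace K N ((snd K M N) ∘ₗ F ∘ₗ (inr K M N)) := by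
  classical
  let bM := Module.Free.chooseBasis K M
  let bN := Module.Free.chooseBasis K N
  rw [trace_eq_matrix_trace K (bM.prod bN), trace_eq_matrix_trace K bM,
    trace_eq_matrix_trace K bN]
  simp only [Matrix.trace, Matrix.diag]
  rw [Fintype.sum_sum_type]
  congr 1
  · apply Finset.sum_congr rfl
    intro i _
    simp [LinearMap.toMatrix_apply, Basis.prod_apply, Basis.prod_repr_inl]
  · apply Finset.sum_congr rfl
    intro i _
    simp [LinearMap.toMatrix_apply, Basis.prod_apply, Basis.prod_repr_inr]

variable {V : Type*} [AddCommGroup V] [Module K V] [Module.Finite K V]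

lemma trace_eq_two_mul_of_ker_eq_range (f g : V →ₗ[K] V)
    (hfg : ∀ v, f (g v) = g (f v)) (h : LinearMap.ker g = LinearMap.range g) :
    ∃ t, trace K V f = 2 * t := by
  classical
  set I : Submodule K V := LinearMap.range g with hI
  have hfI : ∀ v ∈ I, f v ∈ I := by
    rintro v ⟨w, rfl⟩
    exact ⟨f w, (hfg w).symm⟩
  obtain ⟨C, hC⟩ := Submodule.exists_isCompl I
  let e : V ≃ₗ[K] I × C := (Submodule.prodEquivOfIsCompl I C hC).symm
  have htr : trace K V f = trace K (I × C) (e.conj f) := (LinearMap.trace_conj' f e).symm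
  have hIfin : Module.Finite K I := Module.Finite.of_injective I.subtype Subtype.val_injective
  have hCfin : Module.Finite K C := Module.Finite.of_injective C.subtype Subtype.val_injective
  let f₁ : I →ₗ[K] I := f.restrict hfI
  let F₂₂ : C →ₗ[K] C := (snd K I C) ∘ₗ (e.conj f) ∘ₗ (inr K I C)
  -- ψ : C ≃ I given by g
  have hψmem : ∀ c : C, g (c : V) ∈ I := fun c => ⟨c, rfl⟩
  let ψ₀ : C →ₗ[K] I := (g ∘ₗ C.subtype).codRestrict I (fun c => hψmem c)
  have hψinj : Function.Injective ψ₀ := by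
    intro c₁ c₂ hcc
    have : g ((c₁ : V) - c₂) = 0 := by
      have := congrArg (Subtype.val) hcc
      simp only [ψ₀, codRestrict_apply, comp_apply, Submodule.subtype_apply] at this
      rw [map_sub]; exact sub_eq_zero.mpr this
    have hmemI : ((c₁ : V) - c₂) ∈ I := by rw [← h]; exact this
    have hmemC : ((c₁ : V) - c₂) ∈ C := sub_mem c₁.2 c₂.2
    have : ((c₁ : V) - c₂) ∈ I ⊓ C := ⟨hmemI, hmemC⟩
    rw [hC.inf_eq_bot] at this
    exact Subtype.ext (by simpa [sub_eq_zero] using this)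
  have hψsurj : Function.Surjective ψ₀ := by
    rintro ⟨i, v, rfl⟩
    have hv : v ∈ I ⊔ C := by rw [hC.sup_eq_top]; trivial
    obtain ⟨a, ha, b, hb, rfl⟩ := Submodule.mem_sup.mp hv
    refine ⟨⟨b, hb⟩, ?_⟩
    apply Subtype.ext
    have hga : g a = 0 := by
      have : a ∈ LinearMap.ker g := by rw [h]; exact ha
      simpa using this
    simp [ψ₀, map_add, hga]
    rfl
  let ψ : C ≃ₗ[K] I := LinearEquiv.ofBijective ψ₀ ⟨hψinj, hψsurj⟩
  have hψ : ∀ c : C, (ψ c : V) = g (c : V) := fun c => rfl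
  -- identify the diagonal blocks
  have hX : (fst K I C) ∘ₗ (e.conj f) ∘ₗ (inl K I C) = f₁ := by
    ext i
    have h1 : e.symm ((i : I), (0 : C)) = (i : V) := by
      rw [LinearEquiv.symm_symm, Submodule.coe_prodEquivOfIsCompl']
      simp
    have h2 : e (f (i : V)) = (⟨f (i : V), hfI _ i.2⟩, (0:C)) :=
      Submodule.prodEquivOfIsCompl_symm_apply_left (h := hC) (x := (⟨f (i : V), hfI _ i.2⟩ : I))
    simp [LinearEquiv.conj_apply, h1, h2, f₁, LinearMap.restrict_apply]
  have hYval : ∀ c : C, (((e.conj f) ((0 : I), c)).2 : V) = ((e (f (c : V))).2 : V) := by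
    intro c
    have h1 : e.symm ((0 : I), c) = (c : V) := by
      rw [LinearEquiv.symm_symm, Submodule.coe_prodEquivOfIsCompl']
      simp
    simp only [LinearEquiv.conj_apply, comp_apply, LinearEquiv.coe_coe, h1]
  have hcomm : ∀ c : C, f₁ (ψ c) = ψ (F₂₂ c) := by
    intro c
    apply Subtype.ext
    have hL : (f₁ (ψ c) : V) = f (g (c : V)) := rfl
    have hR : (ψ (F₂₂ c) : V) = g ((F₂₂ c : C) : V) := rfl
    have hF : ((F₂₂ c : C) : V) = ((e (f (c : V))).2 : V) := hYval c
    have hdec : ((e (f (c : V))).1 : V) + ((e (f (c : V))).2 : V) = f (c : V) := by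
      have h0 : (Submodule.prodEquivOfIsCompl I C hC) (e (f (c : V))) = f (c : V) :=
        (Submodule.prodEquivOfIsCompl I C hC).apply_symm_apply _
      rw [Submodule.coe_prodEquivOfIsCompl'] at h0
      exact h0
    have hker : g ((e (f (c : V))).1 : V) = 0 := by
      have : ((e (f (c : V))).1 : V) ∈ LinearMap.ker g := by rw [h]; exact (e (f (c : V))).1.2
      simpa using this
    rw [hL, hR, hF, hfg]
    conv_lhs => rw [← hdec]
    rw [map_add, hker, zero_add]
  have hf₁ : f₁ = ψ.conj F₂₂ := by
    ext i
    rw [LinearEquiv.conj_apply, comp_apply, comp_apply]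
    conv_lhs => rw [← ψ.apply_symm_apply i]
    rw [hcomm]
    rfl
  refine ⟨trace K C F₂₂, ?_⟩
  rw [htr, trace_prod_decomp, hX, hf₁, LinearMap.trace_conj', two_mul]

end

section
open NumberField Module LinearMap

open NumberField Module in
lemma even_trace_L (L : Type*) [Field L] [NumberField L]
    (z : L) (hz : z ^ 8 = -240) (w : 𝓞 L) :
    algebraMap ℤ (ZMod 2) (Algebra.intTrace ℤ (𝓞 L) w) = 0 := by
  classical
  have hz0 : z ≠ 0 := by
    intro h
    rw [h] at hz
    norm_num at hz
  -- the integral elements Z and S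
  have hZint : IsIntegral ℤ z := by
    refine ⟨Polynomial.X ^ 8 + Polynomial.C 240, Polynomial.monic_X_pow_add_C _ (by norm_num), ?_⟩
    simp [hz]
  have hSint : IsIntegral ℤ (z ^ 2 / 2) := by
    refine ⟨Polynomial.X ^ 4 + Polynomial.C 15, Polynomial.monic_X_pow_add_C _ (by norm_num), ?_⟩
    have : (z ^ 2 / 2) ^ 4 = -15 := by
      rw [div_pow]
      rw [show (z^2)^4 = z^8 by ring, hz]
      norm_num
    simp [this]
  let Z : (𝓞 L) := ⟨z, hZint⟩
  let S : (𝓞 L) := ⟨z ^ 2 / 2, hSint⟩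
  have hZS : Z ^ 2 = 2 * S := by
    apply Subtype.ext
    show z ^ 2 = 2 * (z ^ 2 / 2)
    field_simp
  have hS4 : S ^ 4 = -15 := by
    apply Subtype.ext
    show (z ^ 2 / 2) ^ 4 = -15
    rw [div_pow, show (z^2)^4 = z^8 by ring, hz]
    norm_num
  have hZ0 : Z ≠ 0 := by
    intro h
    exact hz0 (congrArg Subtype.val h)
  -- base change to ZMod 2
  let V := TensorProduct ℤ (ZMod 2) (𝓞 L)
  let π : (𝓞 L) →ₐ[ℤ] V := Algebra.TensorProduct.includeRight
  have hπsurj : Function.Surjective π := by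
    intro v
    induction v using TensorProduct.induction_on with
    | zero => exact ⟨0, map_zero π⟩
    | tmul a b =>
      refine ⟨(a.val : ℤ) • b, ?_⟩
      show (1 : ZMod 2) ⊗ₜ[ℤ] ((a.val : ℤ) • b) = a ⊗ₜ[ℤ] b
      have ha : ((a.val : ℤ) • (1 : ZMod 2)) = a := by
        rw [Int.smul_one_eq_cast]
        push_cast
        simp [ZMod.natCast_val, ZMod.cast_id]
      rw [← TensorProduct.smul_tmul, ha]
    | add x y hx hy =>
      obtain ⟨bx, hbx⟩ := hx
      obtain ⟨by', hby⟩ := hy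
      exact ⟨bx + by', by rw [map_add, hbx, hby]⟩
  -- kernel of π : elements mapping to zero are divisible by 2
  have hπker : ∀ b : (𝓞 L), π b = 0 → ∃ c : (𝓞 L), b = 2 * c := by
    intro b hb
    let bas := Module.Free.chooseBasis ℤ (𝓞 L)
    let bas' := Algebra.TensorProduct.basis (ZMod 2) bas
    have hb1 : (1 : ZMod 2) ⊗ₜ[ℤ] b = 0 := hb
    have hrep := congrArg (⇑bas'.repr) hb1
    rw [Algebra.TensorProduct.basis_repr_tmul, map_zero, one_smul] at hrep
    have hdvd : ∀ i, ∃ d : ℤ, bas.repr b i = 2 * d := by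
      intro i
      have h1 := DFunLike.congr_fun hrep i
      rw [Finsupp.mapRange_apply] at h1
      have h2 : ((bas.repr b i : ℤ) : ZMod 2) = 0 := by
        simpa [algebraMap_int_eq] using h1
      obtain ⟨d, hd⟩ := (ZMod.intCast_zmod_eq_zero_iff_dvd (bas.repr b i) 2).mp h2
      exact ⟨d, by exact_mod_cast hd⟩
    choose d hd using hdvd
    refine ⟨∑ i, d i • bas i, ?_⟩
    conv_lhs => rw [← bas.sum_repr b]
    rw [Finset.mul_sum]
    apply Finset.sum_congr rfl
    intro i _
    rw [hd i, zsmul_eq_mul, zsmul_eq_mul]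
    push_cast
    ring
  -- pass to the trace over `ZMod 2`
  have h2V : (2 : V) = 0 := by
    have h1 : (2 : V) = algebraMap (ZMod 2) V 2 := (map_ofNat _ 2).symm
    rw [h1, show (2 : ZMod 2) = 0 from rfl, map_zero]
  have h15V : (15 : V) = 1 := by
    have h1 : (15 : V) = algebraMap (ZMod 2) V 15 := (map_ofNat _ 15).symm
    rw [h1, show (15 : ZMod 2) = 1 from by decide, map_one]
  rw [show Algebra.intTrace ℤ (𝓞 L) w = Algebra.trace ℤ (𝓞 L) w from by rw [Algebra.intTrace_eq_trace],
    Algebra.trace_apply, ← LinearMap.trace_baseChange (Algebra.lmul ℤ (𝓞 L) w) (ZMod 2)]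
  have hbase : (Algebra.lmul ℤ (𝓞 L) w).baseChange (ZMod 2) = Algebra.lmul (ZMod 2) V (π w) := by
    apply LinearMap.ext
    intro v
    induction v using TensorProduct.induction_on with
    | zero => simp
    | tmul a b =>
      rw [LinearMap.baseChange_tmul]
      show _ = Algebra.TensorProduct.includeRight w * a ⊗ₜ[ℤ] b
      rw [Algebra.TensorProduct.includeRight_apply, Algebra.TensorProduct.tmul_mul_tmul, one_mul]
      rfl
    | add x y hx hy => rw [map_add, map_add, hx, hy]
  rw [hbase]
  have hker : LinearMap.ker (Algebra.lmul (ZMod 2) V (π Z)) =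
      LinearMap.range (Algebra.lmul (ZMod 2) V (π Z)) := by
    apply le_antisymm
    · intro v hv
      obtain ⟨x, rfl⟩ := hπsurj v
      have hv' : π Z * π x = 0 := hv
      have hZx : π (Z * x) = 0 := by rw [map_mul]; exact hv'
      obtain ⟨c, hc⟩ := hπker _ hZx
      have h0 : Z * ((15 : (𝓞 L)) * x + Z * (S ^ 3 * c)) = 0 := by
        linear_combination (15 : (𝓞 L)) * hc + (S ^ 3 * c) * hZS + 2 * c * hS4
      rcases mul_eq_zero.mp h0 with hcase | hcase
      · exact absurd hcase hZ0
      have h15 : Z * -(S ^ 3 * c) = (15 : (𝓞 L)) * x := by linear_combination -hcase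
      refine ⟨π (-(S ^ 3 * c)), ?_⟩
      show π Z * π (-(S ^ 3 * c)) = π x
      rw [← map_mul, h15, map_mul, map_ofNat, h15V, one_mul]
    · rintro v ⟨u, rfl⟩
      show π Z * (π Z * u) = 0
      rw [← mul_assoc, ← map_mul, show Z * Z = 2 * S from by linear_combination hZS,
        map_mul, map_ofNat, h2V, zero_mul, zero_mul]
  obtain ⟨t, ht⟩ := trace_eq_two_mul_of_ker_eq_range (K := ZMod 2) (V := V)
    (Algebra.lmul (ZMod 2) V (π w)) (Algebra.lmul (ZMod 2) V (π Z))
    (fun v => by simp [Algebra.lmul, mul_left_comm]) hker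
  rw [ht, show (2 : ZMod 2) = 0 from rfl, zero_mul]

end

section
open Polynomial in
lemma odd_trace_F (F : Type*) [Field F] [NumberField F]
    (y : F) (hy : y ^ 8 = -15) (hFy : Algebra.adjoin ℚ {y} = ⊤) (hF8 : finrank ℚ F = 8) :
    ∃ a : 𝓞 F, Algebra.intTrace ℤ (𝓞 F) a = 1 := by
  classical
  have h1y : (1 : F) - y ≠ 0 := by
    intro h
    have hy1 : y = 1 := by linear_combination -h
    rw [hy1] at hy
    have : (16 : F) = 0 := by linear_combination hy
    norm_num at this
  set A : F := 2 * ((1 : F) - y)⁻¹ with hAdef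
  have hA : A * (1 - y) = 2 := by
    rw [hAdef]
    field_simp
  have h1 : A - 2 = A * y := by linear_combination hA
  have hA0 : A ≠ 0 := by
    intro h
    rw [h, zero_mul] at hA
    norm_num at hA
  have h2 : (16 : F) * (A^8 - A^7 + 7*A^6 - 28*A^5 + 70*A^4 - 112*A^3 + 112*A^2 - 64*A + 16) = 0 := by
    linear_combination ((A-2)^7 + (A-2)^6*(A*y) + (A-2)^5*(A*y)^2 + (A-2)^4*(A*y)^3 +
      (A-2)^3*(A*y)^4 + (A-2)^2*(A*y)^5 + (A-2)*(A*y)^6 + (A*y)^7) * h1 + A^8 * hy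
  have hq : A^8 - A^7 + 7*A^6 - 28*A^5 + 70*A^4 - 112*A^3 + 112*A^2 - 64*A + 16 = 0 := by
    rcases mul_eq_zero.mp h2 with h | h
    · norm_num at h
    · exact h
  -- A is integral over ℤ
  have hAint : IsIntegral ℤ A := by
    refine ⟨X^8 + (-(X^7) + C 7 * X^6 - C 28 * X^5 + C 70 * X^4 - C 112 * X^3 + C 112 * X^2
      - C 64 * X + C 16), monic_X_pow_add ?_, ?_⟩
    · refine lt_of_le_of_lt ?_ (by norm_num : (7 : WithBot ℕ) < 8)
      compute_degree
    · have hev : (Polynomial.aeval A) (X^8 + (-(X^7) + C 7 * X^6 - C 28 * X^5 + C 70 * X^4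
          - C 112 * X^3 + C 112 * X^2 - C 64 * X + C 16) : ℤ[X]) =
          A^8 - A^7 + 7*A^6 - 28*A^5 + 70*A^4 - 112*A^3 + 112*A^2 - 64*A + 16 := by
        simp only [map_add, map_sub, map_neg, map_mul, map_pow, aeval_X, aeval_C,
          algebraMap_int_eq, eq_intCast, map_ofNat]
        push_cast
        ring
      rw [← Polynomial.aeval_def, hev]
      exact hq
  have hAalg : IsIntegral ℚ A := IsIntegral.of_finite ℚ A
  -- the minimal polynomial of A over ℚ
  set qQ : ℚ[X] := X^8 + (-(X^7) + C 7 * X^6 - C 28 * X^5 + C 70 * X^4 - C 112 * X^3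
    + C 112 * X^2 - C 64 * X + C 16) with hqQdef
  have hqQmonic : qQ.Monic := by
    apply monic_X_pow_add
    refine lt_of_le_of_lt ?_ (by norm_num : (7 : WithBot ℕ) < 8)
    compute_degree
  have hqQdeg : qQ.natDegree = 8 := by
    rw [hqQdef]
    compute_degree!
  have hqQeval : Polynomial.aeval A qQ = 0 := by
    rw [hqQdef]
    simp only [map_add, map_sub, map_neg, map_mul, map_pow, aeval_X, aeval_C, map_ofNat]
    linear_combination hq
  -- y is a polynomial in A
  have h3 : A * ((8:F)*(y-1)) = A * (A^7 - A^6 + 7*A^5 - 28*A^4 + 70*A^3 - 112*A^2 + 112*A - 64) := by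
    linear_combination (-8 : F) * h1 - hq
  have h4 := mul_left_cancel₀ hA0 h3
  have hy_eq : y = 1 + (8:F)⁻¹ * (A^7 - A^6 + 7*A^5 - 28*A^4 + 70*A^3 - 112*A^2 + 112*A - 64) := by
    have h8 : (8:F) ≠ 0 := by norm_num
    field_simp
    linear_combination h4
  -- A generates F over ℚ
  have hadj : Algebra.adjoin ℚ {A} = ⊤ := by
    rw [eq_top_iff, ← hFy]
    apply Algebra.adjoin_le
    intro t ht
    rw [Set.mem_singleton_iff] at ht
    subst ht
    rw [hy_eq]
    set S := Algebra.adjoin ℚ {A} with hS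
    have hAS : A ∈ S := Algebra.self_mem_adjoin_singleton ℚ A
    have hnum : ∀ n : ℚ, ((n : ℚ) : F) ∈ S := by
      intro n
      have : ((n : ℚ) : F) = algebraMap ℚ F n := rfl
      rw [this]
      exact S.algebraMap_mem n
    have h8inv : ((8:F))⁻¹ ∈ S := by
      have : ((8:F))⁻¹ = algebraMap ℚ F (8⁻¹) := by
        rw [map_inv₀, map_ofNat]
      rw [this]
      exact S.algebraMap_mem _
    refine S.add_mem (S.one_mem) (S.mul_mem h8inv ?_)
    refine S.sub_mem (S.add_mem (S.sub_mem (S.add_mem (S.sub_mem (S.add_mem (S.sub_mem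
      (S.pow_mem hAS 7) (S.pow_mem hAS 6)) (S.mul_mem ?_ (S.pow_mem hAS 5)))
      (S.mul_mem ?_ (S.pow_mem hAS 4))) (S.mul_mem ?_ (S.pow_mem hAS 3)))
      (S.mul_mem ?_ (S.pow_mem hAS 2))) (S.mul_mem ?_ hAS)) ?_
    · exact by simpa using hnum 7
    · exact by simpa using hnum 28
    · exact by simpa using hnum 70
    · exact by simpa using hnum 112
    · exact by simpa using hnum 112
    · exact by simpa using hnum 64
  -- power basis generated by A
  let e : (Algebra.adjoin ℚ ({A} : Set F)) ≃ₐ[ℚ] F :=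
    (Subalgebra.equivOfEq _ _ hadj).trans Subalgebra.topEquiv
  let pb : PowerBasis ℚ F := (Algebra.adjoin.powerBasis hAalg).map e
  have hgen : pb.gen = A := rfl
  have hdim : pb.dim = 8 := by
    have hfr := pb.finrank
    rw [hF8] at hfr
    exact hfr.symm
  have hmindeg : (minpoly ℚ A).natDegree = 8 := by
    have h := pb.natDegree_minpoly
    rw [hgen, hdim] at h
    exact h
  have hmonicm : (minpoly ℚ A).Monic := minpoly.monic hAalg
  obtain ⟨r, hr⟩ := minpoly.dvd ℚ A hqQeval
  have hm0 : minpoly ℚ A ≠ 0 := hmonicm.ne_zero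
  have hr0 : r ≠ 0 := by
    rintro rfl
    rw [mul_zero] at hr
    exact hqQmonic.ne_zero hr
  have hdegr : r.natDegree = 0 := by
    have hdd := congrArg Polynomial.natDegree hr
    rw [Polynomial.natDegree_mul hm0 hr0, hqQdeg, hmindeg] at hdd
    omega
  have hrC : r = C (r.coeff 0) := Polynomial.eq_C_of_natDegree_eq_zero hdegr
  have hlead : r.coeff 0 = 1 := by
    have hll := congrArg Polynomial.leadingCoeff hr
    rw [Polynomial.leadingCoeff_mul, hmonicm.leadingCoeff, one_mul, hqQmonic.leadingCoeff] at hll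
    rw [Polynomial.leadingCoeff, hdegr] at hll
    exact hll.symm
  have hminq : minpoly ℚ A = qQ := by
    rw [hr, hrC, hlead, map_one, mul_one]
  have htr : Algebra.trace ℚ F A = 1 := by
    have hpb := PowerBasis.trace_gen_eq_nextCoeff_minpoly pb
    rw [hgen, hminq] at hpb
    rw [hpb]
    have hnc : qQ.nextCoeff = -1 := by
      rw [Polynomial.nextCoeff_of_natDegree_pos (by rw [hqQdeg]; norm_num), hqQdeg, hqQdef]
      simp [Polynomial.coeff_X_pow, Polynomial.coeff_C, Polynomial.coeff_C_mul, Polynomial.coeff_X]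
    rw [hnc]
    norm_num
  refine ⟨⟨A, hAint⟩, ?_⟩
  have hmap := Algebra.algebraMap_intTrace (A := ℤ) (K := ℚ) (L := F) (B := 𝓞 F) ⟨A, hAint⟩
  rw [show (algebraMap (𝓞 F) F) ⟨A, hAint⟩ = A from rfl, htr] at hmap
  rw [algebraMap_int_eq, eq_intCast] at hmap
  exact_mod_cast hmap

end

end AuxLemmas

/-- Let `F = ℚ(y)` with `y⁸ = -15` and `L = ℚ(z)` with `z⁸ = -240` (both octic
fields). Then the integral trace forms of `F` and `L` are not equivalent. -/
theorem statement_7 (F L : Type*) [Field F] [NumberField F] [Field L] [NumberField L]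
    (y : F) (hy : y ^ 8 = -15) (hFy : Algebra.adjoin ℚ {y} = ⊤) (hF8 : finrank ℚ F = 8)
    (z : L) (hz : z ^ 8 = -240) (hLz : Algebra.adjoin ℚ {z} = ⊤) (hL8 : finrank ℚ L = 8) :
    ¬ IntTraceEquiv F L := by
  rintro ⟨e, he⟩
  obtain ⟨a, ha⟩ := odd_trace_F F y hy hFy hF8
  have h1 := he 1 a
  rw [one_mul, ha] at h1
  have h2 := even_trace_L L z hz (e 1 * e a)
  rw [h1] at h2
  simp at h2
end

section
/- Let F and L be the septic fields defined by p_F = x⁷−3x⁶+4x⁴+x³−4x²−x+1 and p_L = x⁷−3x⁶+2x⁵+4x⁴−3x³−2x²−x−1. Then F and L are not isomorphic. -/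
open Polynomial

namespace Statement8Aux

instance fact2741 : Fact (Nat.Prime 2741) := ⟨by norm_num⟩

noncomputable def pFz : Polynomial ℤ_[2741] :=
  X ^ 7 - 3 * X ^ 6 + 4 * X ^ 4 + X ^ 3 - 4 * X ^ 2 - X + 1

noncomputable def pLz : Polynomial ℤ_[2741] :=
  X ^ 7 - 3 * X ^ 6 + 2 * X ^ 5 + 4 * X ^ 4 - 3 * X ^ 3 - 2 * X ^ 2 - X - 1

lemma evalpFz (z : ℤ_[2741]) :
    pFz.eval z = z ^ 7 - 3 * z ^ 6 + 4 * z ^ 4 + z ^ 3 - 4 * z ^ 2 - z + 1 := by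
  simp [pFz]

lemma derivpFz (z : ℤ_[2741]) :
    pFz.derivative.eval z = 7 * z ^ 6 - 18 * z ^ 5 + 16 * z ^ 3 + 3 * z ^ 2 - 8 * z - 1 := by
  simp [pFz]; ring

lemma evalpLz (z : ℤ_[2741]) :
    pLz.eval z = z ^ 7 - 3 * z ^ 6 + 2 * z ^ 5 + 4 * z ^ 4 - 3 * z ^ 3 - 2 * z ^ 2 - z - 1 := by
  simp [pLz]

lemma derivpLz (z : ℤ_[2741]) :
    pLz.derivative.eval z =
      7 * z ^ 6 - 18 * z ^ 5 + 10 * z ^ 4 + 16 * z ^ 3 - 9 * z ^ 2 - 4 * z - 1 := by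
  simp [pLz]; ring

lemma coe_ofNat' (n : ℕ) [n.AtLeastTwo] :
    ((OfNat.ofNat n : ℤ_[2741]) : ℚ_[2741]) = OfNat.ofNat n := rfl

lemma norm_one_of_not_dvd (m : ℤ) (h : ¬ ((2741 : ℤ) ∣ m)) : ‖((m : ℤ) : ℤ_[2741])‖ = 1 := by
  rcases lt_or_eq_of_le (PadicInt.norm_le_one ((m : ℤ) : ℤ_[2741])) with h1 | h1
  · exact absurd ((PadicInt.norm_int_lt_one_iff_dvd m).1 h1) h
  · exact h1

lemma toZMod_eq_of_dvd {z w : ℤ_[2741]} (h : ((2741 : ℕ) : ℤ_[2741]) ∣ (z - w)) :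
    PadicInt.toZMod z = PadicInt.toZMod w := by
  have h0 : PadicInt.toZMod (z - w) = 0 := by
    rw [← RingHom.mem_ker, PadicInt.ker_toZMod, PadicInt.maximalIdeal_eq_span_p,
      Ideal.mem_span_singleton]
    exact_mod_cast h
  rw [map_sub] at h0
  exact sub_eq_zero.mp h0

lemma dvd_of_toZMod_eq {z w : ℤ_[2741]} (h : PadicInt.toZMod z = PadicInt.toZMod w) :
    ((2741 : ℕ) : ℤ_[2741]) ∣ (z - w) := by
  have h0 : PadicInt.toZMod (z - w) = 0 := by rw [map_sub, h, sub_self]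
  rw [← RingHom.mem_ker, PadicInt.ker_toZMod, PadicInt.maximalIdeal_eq_span_p,
    Ideal.mem_span_singleton] at h0
  exact_mod_cast h0

lemma henselRoot (a ev dv : ℤ) (hev : pFz.eval ((a : ℤ) : ℤ_[2741]) = ((ev : ℤ) : ℤ_[2741]))
    (hdv : pFz.derivative.eval ((a : ℤ) : ℤ_[2741]) = ((dv : ℤ) : ℤ_[2741]))
    (h1 : (2741 : ℤ) ∣ ev) (h2 : ¬ ((2741 : ℤ) ∣ dv)) :
    ∃ z : ℤ_[2741], pFz.eval z = 0 ∧ PadicInt.toZMod z = ((a : ℤ) : ZMod 2741) := by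
  have hd : ‖pFz.derivative.eval ((a : ℤ) : ℤ_[2741])‖ = 1 := by
    rw [hdv]; exact norm_one_of_not_dvd _ h2
  have hnorm : ‖pFz.eval ((a : ℤ) : ℤ_[2741])‖ < ‖pFz.derivative.eval ((a : ℤ) : ℤ_[2741])‖ ^ 2 := by
    rw [hd, hev, one_pow]
    exact (PadicInt.norm_int_lt_one_iff_dvd ev).2 h1
  obtain ⟨z, hz0, hzdist, -, -⟩ := hensels_lemma hnorm
  refine ⟨z, hz0, ?_⟩
  rw [coe_aeval_eq_eval, hd] at hzdist
  have hdvd := (PadicInt.norm_lt_one_iff_dvd _).1 hzdist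
  have := toZMod_eq_of_dvd hdvd
  rwa [map_intCast] at this

lemma pow1370 : (1676 : ZMod 2741) ^ 1370 = 2740 := by
  have h1 : (1676:ZMod 2741)^1 = 1676 := by decide
  have h2 : (1676:ZMod 2741)^2 = 2192 := by
    have e : (1676:ZMod 2741)^2 = ((1676:ZMod 2741)^1)^2 := by ring
    rw [e, h1]; decide
  have h5 : (1676:ZMod 2741)^5 = 963 := by
    have e : (1676:ZMod 2741)^5 = ((1676:ZMod 2741)^2)^2 * 1676 := by ring
    rw [e, h2]; decide
  have h10 : (1676:ZMod 2741)^10 = 911 := by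
    have e : (1676:ZMod 2741)^10 = ((1676:ZMod 2741)^5)^2 := by ring
    rw [e, h5]; decide
  have h21 : (1676:ZMod 2741)^21 = 2477 := by
    have e : (1676:ZMod 2741)^21 = ((1676:ZMod 2741)^10)^2 * 1676 := by ring
    rw [e, h10]; decide
  have h42 : (1676:ZMod 2741)^42 = 1171 := by
    have e : (1676:ZMod 2741)^42 = ((1676:ZMod 2741)^21)^2 := by ring
    rw [e, h21]; decide
  have h85 : (1676:ZMod 2741)^85 = 243 := by
    have e : (1676:ZMod 2741)^85 = ((1676:ZMod 2741)^42)^2 * 1676 := by ring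
    rw [e, h42]; decide
  have h171 : (1676:ZMod 2741)^171 = 2319 := by
    have e : (1676:ZMod 2741)^171 = ((1676:ZMod 2741)^85)^2 * 1676 := by ring
    rw [e, h85]; decide
  have h342 : (1676:ZMod 2741)^342 = 2660 := by
    have e : (1676:ZMod 2741)^342 = ((1676:ZMod 2741)^171)^2 := pow_mul (1676:ZMod 2741) 171 2
    rw [e, h171]; decide
  have h685 : (1676:ZMod 2741)^685 = 2085 := by
    have e : (1676:ZMod 2741)^685 = ((1676:ZMod 2741)^342)^2 * 1676 := by rw [← pow_mul, ← pow_succ]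
    rw [e, h342]; decide
  have e : (1676:ZMod 2741)^1370 = ((1676:ZMod 2741)^685)^2 := by ring
  rw [e, h685]; decide

lemma classify (x : ZMod 2741) (hx : x^7-3*x^6+2*x^5+4*x^4-3*x^3-2*x^2-x-1 = 0) :
    x = 221 ∨ x = 658 ∨ x = 1027 := by
  have h : (2741 : ZMod 2741) = 0 := by
    have := ZMod.natCast_self 2741
    exact_mod_cast this
  have factz : x^7-3*x^6+2*x^5+4*x^4-3*x^3-2*x^2-x-1 =
      (x-221)*(x-658)^2*(x-1027)^2*(x^2+847*x+83) := by
    linear_combination (3056004609327 + 31156906581743*x - 259719048107*x^2 + 639545919*x^3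
      - 356295*x^4 - 691*x^5 + x^6) * h
  rw [factz] at hx
  rcases mul_eq_zero.1 hx with h' | hq
  · rcases mul_eq_zero.1 h' with h' | h3
    · rcases mul_eq_zero.1 h' with h1 | h2
      · exact Or.inl (by linear_combination h1)
      · exact Or.inr (Or.inl (by
          have := pow_eq_zero_iff (n := 2) (by norm_num) |>.1 h2
          linear_combination this))
    · exact Or.inr (Or.inr (by
        have := pow_eq_zero_iff (n := 2) (by norm_num) |>.1 h3
        linear_combination this))
  · exfalso
    have hy : (2*x+847)^2 = (1676 : ZMod 2741) := by linear_combination 4 * hq + 261 * h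
    have hyne : (2*x+847) ≠ 0 := by
      intro h0
      rw [h0] at hy
      simp at hy
      exact absurd hy.symm (by decide)
    have h1 : (2*x+847)^2740 = 1 := ZMod.pow_card_sub_one_eq_one hyne
    have h2 : (2*x+847)^2740 = (1676 : ZMod 2741)^1370 := by
      rw [← hy, ← pow_mul]
    rw [pow1370, h1] at h2
    exact absurd h2.symm (by decide)

/-- The double roots mod 2741 do not lift. -/
lemma no_lift (a u v : ℤ) (hu : ((u : ℤ) : ZMod 2741) ≠ 0)
    (hev : pLz.eval ((a : ℤ) : ℤ_[2741]) = ((2741 * u : ℤ) : ℤ_[2741]))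
    (hdv : pLz.derivative.eval ((a : ℤ) : ℤ_[2741]) = ((2741 * v : ℤ) : ℤ_[2741]))
    (w : ℤ_[2741]) (hw : pLz.eval w = 0) :
    PadicInt.toZMod w ≠ ((a : ℤ) : ZMod 2741) := by
  intro hmod
  have hdvd : ((2741 : ℕ) : ℤ_[2741]) ∣ (w - ((a : ℤ) : ℤ_[2741])) := by
    apply dvd_of_toZMod_eq
    rw [hmod, map_intCast]
  obtain ⟨t, ht⟩ := hdvd
  obtain ⟨k, hk⟩ := Polynomial.binomExpansion pLz ((a : ℤ) : ℤ_[2741]) (((2741 : ℕ) : ℤ_[2741]) * t)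
  have hwa : w = ((a : ℤ) : ℤ_[2741]) + ((2741 : ℕ) : ℤ_[2741]) * t := by
    rw [← ht]; ring
  rw [← hwa, hw, hev, hdv] at hk
  have hfac : (0 : ℤ_[2741]) = ((2741 : ℕ) : ℤ_[2741]) *
      (((u : ℤ) : ℤ_[2741]) + ((2741 : ℕ) : ℤ_[2741]) * (((v : ℤ) : ℤ_[2741]) * t + k * t ^ 2)) := by
    rw [hk]; push_cast; ring
  have hpne : ((2741 : ℕ) : ℤ_[2741]) ≠ 0 := Nat.cast_ne_zero.2 (by norm_num)
  have hz : ((u : ℤ) : ℤ_[2741]) + ((2741 : ℕ) : ℤ_[2741]) * (((v : ℤ) : ℤ_[2741]) * t + k * t ^ 2) = 0 :=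
    by
    rcases mul_eq_zero.1 hfac.symm with h' | h'
    · exact absurd h' hpne
    · exact h'
  have := congrArg PadicInt.toZMod hz
  rw [map_add, map_mul, map_intCast, map_natCast, ZMod.natCast_self, zero_mul, add_zero,
    map_zero] at this
  exact hu this

end Statement8Aux

open Statement8Aux PadicInt

/-- The septic fields defined by `x⁷ - 3x⁶ + 4x⁴ + x³ - 4x² - x + 1` and
`x⁷ - 3x⁶ + 2x⁵ + 4x⁴ - 3x³ - 2x² - x - 1` are not isomorphic. -/
theorem statement_8 :
    ¬ Nonempty
      (AdjoinRoot (X ^ 7 - 3 * X ^ 6 + 4 * X ^ 4 + X ^ 3 - 4 * X ^ 2 - X + 1 : ℚ[X]) ≃ₐ[ℚ]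
        AdjoinRoot
          (X ^ 7 - 3 * X ^ 6 + 2 * X ^ 5 + 4 * X ^ 4 - 3 * X ^ 3 - 2 * X ^ 2 - X - 1 : ℚ[X])) := by
  rintro ⟨e⟩
  set pFQ : ℚ[X] := X ^ 7 - 3 * X ^ 6 + 4 * X ^ 4 + X ^ 3 - 4 * X ^ 2 - X + 1 with hpFQ
  set pLQ : ℚ[X] := X ^ 7 - 3 * X ^ 6 + 2 * X ^ 5 + 4 * X ^ 4 - 3 * X ^ 3 - 2 * X ^ 2 - X - 1
    with hpLQ
  -- two distinct roots of pF in ℤ_[2741] via Hensel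
  obtain ⟨z₁, hz₁, hz₁m⟩ := henselRoot 296 197068837373779929 4667228171442559
    (by rw [evalpFz]; push_cast; norm_num) (by rw [derivpFz]; push_cast; norm_num)
    (by norm_num) (by decide)
  obtain ⟨z₂, hz₂, hz₂m⟩ := henselRoot 1445 13127207300025454976331 63610907588386243639
    (by rw [evalpFz]; push_cast; norm_num) (by rw [derivpFz]; push_cast; norm_num)
    (by norm_num) (by decide)
  -- corresponding roots in ℚ_[2741]
  have hr : ∀ z : ℤ_[2741], pFz.eval z = 0 → (aeval ((z : ℚ_[2741])) pFQ = 0) := by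
    intro z hz
    rw [evalpFz] at hz
    have h2 := congrArg (fun x : ℤ_[2741] => (x : ℚ_[2741])) hz
    push_cast at h2
    rw [show ((3 : ℤ_[2741]) : ℚ_[2741]) = 3 from rfl, show ((4 : ℤ_[2741]) : ℚ_[2741]) = 4 from rfl] at h2
    rw [hpFQ]
    simp only [map_add, map_sub, map_mul, map_pow, aeval_X, map_ofNat, map_one]
    convert h2 using 2 <;> norm_num
  set φ₁ := AdjoinRoot.liftAlgHom pFQ (Algebra.ofId ℚ ℚ_[2741]) (z₁ : ℚ_[2741]) (hr z₁ hz₁) with hφ₁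
  set φ₂ := AdjoinRoot.liftAlgHom pFQ (Algebra.ofId ℚ ℚ_[2741]) (z₂ : ℚ_[2741]) (hr z₂ hz₂) with hφ₂
  set ψ₁ := φ₁.comp e.symm.toAlgHom with hψ₁
  set ψ₂ := φ₂.comp e.symm.toAlgHom with hψ₂
  set s₁ := ψ₁ (AdjoinRoot.root pLQ) with hs₁
  set s₂ := ψ₂ (AdjoinRoot.root pLQ) with hs₂
  have hroot₁ : aeval s₁ pLQ = 0 := AdjoinRoot.aeval_algHom_eq_zero pLQ ψ₁
  have hroot₂ : aeval s₂ pLQ = 0 := AdjoinRoot.aeval_algHom_eq_zero pLQ ψ₂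
  have hsne : s₁ ≠ s₂ := by
    intro hss
    have hψeq : ψ₁ = ψ₂ := AdjoinRoot.algHom_ext hss
    have h1 : (z₁ : ℚ_[2741]) = ψ₁ (e (AdjoinRoot.root pFQ)) := by
      rw [hψ₁, AlgHom.comp_apply]
      simp [hφ₁]
      exact (AdjoinRoot.liftAlgHom_root _ _ _ _).symm
    have h2 : (z₂ : ℚ_[2741]) = ψ₂ (e (AdjoinRoot.root pFQ)) := by
      rw [hψ₂, AlgHom.comp_apply]
      simp [hφ₂]
      exact (AdjoinRoot.liftAlgHom_root _ _ _ _).symm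
    have : (z₁ : ℚ_[2741]) = (z₂ : ℚ_[2741]) := by rw [h1, h2, hψeq]
    have hz12 : z₁ = z₂ := Subtype.coe_injective this
    rw [hz12, hz₂m] at hz₁m
    exact absurd hz₁m (by decide)
  -- the roots of pLQ in ℚ_[2741] are integral
  have hint : ∀ s : ℚ_[2741], aeval s pLQ = 0 → ∃ w : ℤ_[2741], (w : ℚ_[2741]) = s ∧
      pLz.eval w = 0 := by
    intro s hs
    have hmono : (pLz).Monic := by
      unfold pLz
      monicity!
    have hsi : IsIntegral ℤ_[2741] s := by
      refine ⟨pLz, hmono, ?_⟩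
      rw [hpLQ] at hs
      simp only [map_add, map_sub, map_mul, map_pow, aeval_X, map_ofNat, map_one] at hs
      rw [pLz]
      simp only [eval₂_sub, eval₂_add, eval₂_mul, eval₂_pow, eval₂_X, eval₂_ofNat, eval₂_one]
      convert hs using 2 <;> norm_num
    obtain ⟨w, hw⟩ := IsIntegrallyClosed.isIntegral_iff.mp hsi
    rw [PadicInt.algebraMap_apply] at hw
    refine ⟨w, hw, ?_⟩
    rw [evalpLz]
    have hs' : s^7 - 3*s^6 + 2*s^5 + 4*s^4 - 3*s^3 - 2*s^2 - s - 1 = 0 := by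
      rw [hpLQ] at hs
      simp only [map_add, map_sub, map_mul, map_pow, aeval_X, map_one, map_ofNat] at hs
      convert hs using 2 <;> norm_num
    rw [← hw] at hs'
    have hcast : ((w ^ 7 - 3 * w ^ 6 + 2 * w ^ 5 + 4 * w ^ 4 - 3 * w ^ 3 - 2 * w ^ 2 - w - 1 :
        ℤ_[2741]) : ℚ_[2741]) = ((0 : ℤ_[2741]) : ℚ_[2741]) := by
      have c2 : ((2 : ℤ_[2741]) : ℚ_[2741]) = 2 := rfl
      have c3 : ((3 : ℤ_[2741]) : ℚ_[2741]) = 3 := rfl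
      have c4 : ((4 : ℤ_[2741]) : ℚ_[2741]) = 4 := rfl
      push_cast [c2, c3, c4]
      linear_combination hs'
    exact Subtype.coe_injective hcast
  obtain ⟨w₁, hw₁c, hw₁⟩ := hint s₁ hroot₁
  obtain ⟨w₂, hw₂c, hw₂⟩ := hint s₂ hroot₂
  have hwne : w₁ ≠ w₂ := fun h => hsne (by rw [← hw₁c, ← hw₂c, h])
  -- classification of residues
  have hcls : ∀ w : ℤ_[2741], pLz.eval w = 0 → PadicInt.toZMod w = 221 := by
    intro w hw
    have h0 : PadicInt.toZMod w ^7 - 3*PadicInt.toZMod w^6 + 2*PadicInt.toZMod w^5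
        + 4*PadicInt.toZMod w^4 - 3*PadicInt.toZMod w^3 - 2*PadicInt.toZMod w^2
        - PadicInt.toZMod w - 1 = 0 := by
      rw [evalpLz] at hw
      have := congrArg PadicInt.toZMod hw
      simp only [map_add, map_sub, map_mul, map_pow, map_one, map_zero, map_ofNat] at this
      convert this using 2 <;> norm_num
    rcases classify _ h0 with h | h | h
    · exact h
    · exact absurd (h.trans (by norm_num)) (no_lift 658 19394993910718137 206464450109447
        (by decide)
        (by rw [evalpLz]; push_cast; norm_num)
        (by rw [derivpLz]; push_cast; norm_num) w hw)
    · exact absurd (h.trans (by norm_num)) (no_lift 1027 438343337743789719 2988983348229665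
        (by decide)
        (by rw [evalpLz]; push_cast; norm_num)
        (by rw [derivpLz]; push_cast; norm_num) w hw)
  -- both w₁ w₂ reduce to 221, but 221 is a simple root: contradiction
  have h221₁ := hcls w₁ hw₁
  have h221₂ := hcls w₂ hw₂
  obtain ⟨t, ht⟩ := dvd_of_toZMod_eq (h221₂.trans h221₁.symm)
  obtain ⟨k, hk⟩ := Polynomial.binomExpansion pLz w₁ (((2741 : ℕ) : ℤ_[2741]) * t)
  have hw2w1 : w₂ = w₁ + ((2741 : ℕ) : ℤ_[2741]) * t := by rw [← ht]; ring
  rw [← hw2w1, hw₂, hw₁] at hk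
  have htne : ((2741 : ℕ) : ℤ_[2741]) * t ≠ 0 := by
    intro h
    exact hwne ((by rw [hw2w1, h, add_zero] : w₂ = w₁)).symm
  have hfac : (((2741 : ℕ) : ℤ_[2741]) * t) *
      (pLz.derivative.eval w₁ + k * (((2741 : ℕ) : ℤ_[2741]) * t)) = 0 := by
    linear_combination -hk
  have hD : pLz.derivative.eval w₁ + k * (((2741 : ℕ) : ℤ_[2741]) * t) = 0 := by
    rcases mul_eq_zero.1 hfac with h | h
    · exact absurd h htne
    · exact h
  have hDmod : PadicInt.toZMod (pLz.derivative.eval w₁) = 0 := by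
    have := congrArg PadicInt.toZMod hD
    rw [map_add, map_mul, map_mul, map_natCast, ZMod.natCast_self, zero_mul, mul_zero, add_zero,
      map_zero] at this
    exact this
  have hDval : PadicInt.toZMod (pLz.derivative.eval w₁) =
      7*(221 : ZMod 2741)^6 - 18*221^5 + 10*221^4 + 16*221^3 - 9*221^2 - 4*221 - 1 := by
    rw [derivpLz]
    simp only [map_sub, map_add, map_mul, map_pow, map_ofNat, map_one, h221₁]
  rw [hDval] at hDmod
  exact absurd hDmod (by decide)
end
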